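/- Let q be an odd prime power. The number of involutions in PGL(2,q) is exactly q^2. -/

import Mathlib

open Matrix

section Aux

variable {F : Type*} [Field F]

local notation "M2" => Matrix (Fin 2) (Fin 2) F

/-- Center of GL₂ is scalars. -/
lemma aux_center_iff (A : (M2)ˣ) :
    A ∈ Subgroup.center (M2)ˣ ↔ ∃ c : F, (A : M2) = c • (1 : M2) := by
  constructor
  · intro h
    rw [Subgroup.mem_center_iff] at h
    have hU : ∃ u : (M2)ˣ, (u : M2) = !![(1:F),1;0,1] := by
      refine ⟨⟨!![(1:F),1;0,1], !![(1:F),-1;0,1], ?_, ?_⟩, rfl⟩ <;>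
        · ext i j; fin_cases i <;> fin_cases j <;>
            simp [Matrix.mul_apply, Fin.sum_univ_two]
    have hV : ∃ u : (M2)ˣ, (u : M2) = !![(1:F),0;1,1] := by
      refine ⟨⟨!![(1:F),0;1,1], !![(1:F),0;-1,1], ?_, ?_⟩, rfl⟩ <;>
        · ext i j; fin_cases i <;> fin_cases j <;>
            simp [Matrix.mul_apply, Fin.sum_univ_two]
    obtain ⟨u, hu⟩ := hU
    obtain ⟨v, hv⟩ := hV
    have h1 : (u : M2) * (A : M2) = (A : M2) * (u : M2) := by
      rw [← Units.val_mul, ← Units.val_mul, h u]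
    have h2 : (v : M2) * (A : M2) = (A : M2) * (v : M2) := by
      rw [← Units.val_mul, ← Units.val_mul, h v]
    rw [hu] at h1; rw [hv] at h2
    have e1 := congrFun (congrFun h1 0) 1
    have e2 := congrFun (congrFun h1 1) 1
    have e3 := congrFun (congrFun h2 0) 0
    have e4 := congrFun (congrFun h2 0) 1
    simp [Matrix.mul_apply, Fin.sum_univ_two] at e1 e2 e3 e4
    have ha : (A : M2) 1 1 = (A : M2) 0 0 := by linear_combination e1
    refine ⟨(A : M2) 0 0, ?_⟩
    conv_lhs => rw [Matrix.eta_fin_two ((A : M2))]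
    rw [e2, e3, ha]
    ext i j; fin_cases i <;> fin_cases j <;>
      simp [Matrix.smul_apply, Matrix.one_apply]
  · rintro ⟨c, hc⟩
    rw [Subgroup.mem_center_iff]
    intro g
    apply Units.ext
    rw [Units.val_mul, Units.val_mul, hc, smul_mul_assoc, one_mul, mul_smul_comm, mul_one]

lemma aux_two_ne_zero [Fintype F] (hodd : Odd (Fintype.card F)) : (2 : F) ≠ 0 := by
  intro h
  have : ((2 : ℕ) : F) = 0 := by push_cast; exact h
  have hd : ringChar F ∣ 2 := ringChar.dvd this
  have hchar : ringChar F = 2 := by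
    have h1 : ringChar F ≠ 1 := CharP.ringChar_ne_one
    rcases (Nat.prime_two).eq_one_or_self_of_dvd _ hd with h | h
    · exact absurd h h1
    · exact h
  have := FiniteField.even_card_iff_char_two.mp hchar
  rw [Nat.odd_iff] at hodd
  omega



/-- order-2 in the quotient iff trace zero. -/
lemma aux_order_two_iff (h2 : (2 : F) ≠ 0) (A : (M2)ˣ) :
    orderOf (QuotientGroup.mk A :
        (M2)ˣ ⧸ Subgroup.center (M2)ˣ) = 2 ↔ (A : M2) 0 0 + (A : M2) 1 1 = 0 := by
  have hdet : ((A : M2)).det ≠ 0 := by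
    have hu : IsUnit ((A : M2)) := A.isUnit
    rw [Matrix.isUnit_iff_isUnit_det, isUnit_iff_ne_zero] at hu
    exact hu
  rw [Matrix.det_fin_two] at hdet
  constructor
  · intro h
    have hpow : (QuotientGroup.mk (A ^ 2) :
        (M2)ˣ ⧸ Subgroup.center (M2)ˣ) = 1 := by
      have hh := pow_orderOf_eq_one (QuotientGroup.mk A :
        (M2)ˣ ⧸ Subgroup.center (M2)ˣ)
      rw [h] at hh
      rw [QuotientGroup.mk_pow]
      exact hh
    have hne : (QuotientGroup.mk A :
        (M2)ˣ ⧸ Subgroup.center (M2)ˣ) ≠ 1 := by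
      intro hh; rw [hh, orderOf_one] at h; simp at h
    rw [QuotientGroup.eq_one_iff, aux_center_iff] at hpow
    obtain ⟨c, hc⟩ := hpow
    rw [Units.val_pow_eq_pow_val, pow_two] at hc
    by_contra htr
    apply hne
    rw [QuotientGroup.eq_one_iff, aux_center_iff]
    have s01 := congrFun (congrFun hc 0) 1
    have s10 := congrFun (congrFun hc 1) 0
    have s00 := congrFun (congrFun hc 0) 0
    have s11 := congrFun (congrFun hc 1) 1
    simp [Matrix.mul_apply, Fin.sum_univ_two, Matrix.smul_apply, Matrix.one_apply] at s01 s10 s00 s11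
    have hb : (A : M2) 0 1 = 0 := by
      rcases mul_eq_zero.mp (show (A : M2) 0 1 * ((A : M2) 0 0 + (A : M2) 1 1) = 0 by
        linear_combination s01) with h' | h'
      · exact h'
      · exact absurd h' htr
    have hcc : (A : M2) 1 0 = 0 := by
      rcases mul_eq_zero.mp (show (A : M2) 1 0 * ((A : M2) 0 0 + (A : M2) 1 1) = 0 by
        linear_combination s10) with h' | h'
      · exact h'
      · exact absurd h' htr
    have had : (A : M2) 1 1 = (A : M2) 0 0 := by
      rcases mul_eq_zero.mp (show ((A : M2) 0 0 - (A : M2) 1 1) * ((A : M2) 0 0 + (A : M2) 1 1) = 0 by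
        linear_combination s00 - s11) with h' | h'
      · linear_combination -h'
      · exact absurd h' htr
    refine ⟨(A : M2) 0 0, ?_⟩
    conv_lhs => rw [Matrix.eta_fin_two ((A : M2))]
    rw [hb, hcc, had]
    ext i j; fin_cases i <;> fin_cases j <;>
      simp [Matrix.smul_apply, Matrix.one_apply]
  · intro htr
    have hne : (QuotientGroup.mk A :
        (M2)ˣ ⧸ Subgroup.center (M2)ˣ) ≠ 1 := by
      rw [Ne, QuotientGroup.eq_one_iff, aux_center_iff]
      rintro ⟨c, hc⟩
      have e00 := congrFun (congrFun hc 0) 0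
      have e11 := congrFun (congrFun hc 1) 1
      have e01 := congrFun (congrFun hc 0) 1
      have e10 := congrFun (congrFun hc 1) 0
      simp [Matrix.smul_apply, Matrix.one_apply] at e00 e11 e01 e10
      have hc0 : c = 0 := by
        have h2c : (2 : F) * c = 0 := by linear_combination htr - e00 - e11
        rcases mul_eq_zero.mp h2c with h' | h'
        · exact absurd h' h2
        · exact h'
      apply hdet
      rw [e00, e11, e01, e10, hc0]
      ring
    have hpow : (QuotientGroup.mk A :
        (M2)ˣ ⧸ Subgroup.center (M2)ˣ) ^ 2 = 1 := by
      rw [← QuotientGroup.mk_pow, QuotientGroup.eq_one_iff, aux_center_iff]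
      refine ⟨(A : M2) 0 0 * (A : M2) 0 0 + (A : M2) 0 1 * (A : M2) 1 0, ?_⟩
      rw [Units.val_pow_eq_pow_val, pow_two]
      have hd : (A : M2) 1 1 = -((A : M2) 0 0) := by linear_combination htr
      ext i j
      fin_cases i <;> fin_cases j <;>
        simp [Matrix.mul_apply, Fin.sum_univ_two, Matrix.smul_apply, Matrix.one_apply, hd] <;>
        ring
    exact orderOf_eq_prime hpow hne

/-- card of center of GL₂ equals card Fˣ. -/
lemma aux_card_center [Fintype F] :
    Nat.card (Subgroup.center (M2)ˣ) = Fintype.card F - 1 := by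
  classical
  have key : Nat.card Fˣ = Nat.card (Subgroup.center (M2)ˣ) := by
    have hsc : ∀ c : F, (Matrix.scalar (Fin 2)) c = c • (1 : M2) := by
      intro c; ext i j
      fin_cases i <;> fin_cases j <;>
        simp [Matrix.smul_apply, Matrix.one_apply]
    refine Nat.card_eq_of_bijective
      (fun c => ⟨Units.map ((Matrix.scalar (Fin 2)).toMonoidHom : F →* M2) c,
        (aux_center_iff _).mpr ⟨(c : F), by
          rw [Units.coe_map]; exact hsc (c : F)⟩⟩) ⟨?_, ?_⟩
    · intro c1 c2 h
      have := congrArg (fun x => ((x : Subgroup.center (M2)ˣ) : (M2)ˣ).val 0 0) h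
      simp only at this
      rw [Units.coe_map, Units.coe_map] at this
      apply Units.ext
      simpa [hsc, Matrix.smul_apply, Matrix.one_apply] using this
    · rintro ⟨A, hA⟩
      obtain ⟨c, hc⟩ := (aux_center_iff A).mp hA
      have hc0 : c ≠ 0 := by
        intro h
        have : ((A : M2)).det ≠ 0 := by
          have hu : IsUnit ((A : M2)) := A.isUnit
          rw [Matrix.isUnit_iff_isUnit_det, isUnit_iff_ne_zero] at hu
          exact hu
        apply this
        rw [hc, h, zero_smul, Matrix.det_fin_two]
        simp
      refine ⟨Units.mk0 c hc0, ?_⟩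
      apply Subtype.ext
      apply Units.ext
      rw [Units.coe_map]
      simp only [Units.val_mk0, RingHom.toMonoidHom_eq_coe, MonoidHom.coe_coe]
      rw [hsc, ← hc]
  rw [← key, Nat.card_eq_fintype_card, Fintype.card_units]

/-- fibering a subtype of the quotient. -/
lemma aux_card_fiber {G : Type*} [Group G] (Z : Subgroup G) [Z.Normal] (Q : G ⧸ Z → Prop) :
    Nat.card {g : G // Q (QuotientGroup.mk g)} = Nat.card {x : G ⧸ Z // Q x} * Nat.card Z := by
  rw [← Nat.card_prod]
  refine Nat.card_congr
    { toFun := fun g => (⟨QuotientGroup.mk g.1, g.2⟩,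
        ⟨(Quotient.out (QuotientGroup.mk g.1 : G ⧸ Z))⁻¹ * g.1,
          QuotientGroup.eq.mp (QuotientGroup.out_eq' _)⟩),
      invFun := fun p => ⟨(Quotient.out (p.1.1 : G ⧸ Z)) * p.2.1, by
        have h1 : (QuotientGroup.mk (Quotient.out (p.1.1 : G ⧸ Z) * p.2.1) : G ⧸ Z) = p.1.1 := by
          rw [QuotientGroup.mk_mul, (QuotientGroup.eq_one_iff _).mpr p.2.2, mul_one,
            QuotientGroup.out_eq']
        rw [h1]; exact p.1.2⟩,
      left_inv := fun g => Subtype.ext (by group),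
      right_inv := fun p => by
        have h1 : (QuotientGroup.mk (Quotient.out (p.1.1 : G ⧸ Z) * p.2.1) : G ⧸ Z) = p.1.1 := by
          rw [QuotientGroup.mk_mul, (QuotientGroup.eq_one_iff _).mpr p.2.2, mul_one,
            QuotientGroup.out_eq']
        ext
        · exact h1
        · show (Quotient.out (QuotientGroup.mk _ : G ⧸ Z))⁻¹ * _ = _
          rw [h1]
          group }

/-- counting triples. -/
lemma aux_card_triple [Fintype F] :
    Nat.card {v : F × F × F // v.2.1 * v.2.2 ≠ -(v.1 * v.1)} =
      Fintype.card F ^ 2 * (Fintype.card F - 1) := by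
  classical
  set q := Fintype.card F with hqdef
  have hinner : ∀ a b : F, Nat.card {c : F // b * c ≠ -(a * a)} =
      if b = 0 then (if a = 0 then 0 else q) else q - 1 := by
    intro a b
    by_cases hb : b = 0
    · subst hb
      by_cases ha : a = 0
      · subst ha
        rw [if_pos rfl, if_pos rfl]
        have : IsEmpty {c : F // (0 : F) * c ≠ -((0 : F) * 0)} :=
          ⟨fun c => c.2 (by ring)⟩
        exact Nat.card_of_isEmpty
      · rw [if_pos rfl, if_neg ha]
        have e : {c : F // (0 : F) * c ≠ -(a * a)} ≃ F :=
          Equiv.subtypeUnivEquiv (fun c h => by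
            have haa : a * a = 0 := by linear_combination h
            exact ha (mul_self_eq_zero.mp haa))
        rw [Nat.card_congr e, Nat.card_eq_fintype_card]
    · rw [if_neg hb]
      have e : {c : F // b * c ≠ -(a * a)} ≃ {c : F // c ≠ b⁻¹ * (-(a * a))} :=
        Equiv.subtypeEquivRight (fun c => by
          rw [not_iff_not]
          constructor
          · intro h; field_simp; linear_combination h
          · intro h; rw [h]; field_simp)
      rw [Nat.card_congr e, Nat.card_eq_fintype_card]
      have h1 := Fintype.card_subtype_compl (fun c : F => c = b⁻¹ * (-(a * a)))
      simp only [Fintype.card_subtype_eq] at h1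
      convert h1 using 2
  have e1 : {v : F × F × F // v.2.1 * v.2.2 ≠ -(v.1 * v.1)} ≃
      Σ a : F, {bc : F × F // bc.1 * bc.2 ≠ -(a * a)} :=
    Equiv.subtypeProdEquivSigmaSubtype (fun (a : F) (bc : F × F) => bc.1 * bc.2 ≠ -(a * a))
  have e2 : ∀ a : F, {bc : F × F // bc.1 * bc.2 ≠ -(a * a)} ≃
      Σ b : F, {c : F // b * c ≠ -(a * a)} :=
    fun a => Equiv.subtypeProdEquivSigmaSubtype (fun (b : F) (c : F) => b * c ≠ -(a * a))
  rw [Nat.card_congr (e1.trans (Equiv.sigmaCongrRight e2)), Nat.card_eq_fintype_card,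
    Fintype.card_sigma]
  have hmid : ∀ a : F, Fintype.card (Σ b : F, {c : F // b * c ≠ -(a * a)}) =
      (if a = 0 then 0 else q) + (q - 1) * (q - 1) := by
    intro a
    rw [Fintype.card_sigma]
    rw [Finset.sum_congr rfl (fun b _ => by
      rw [← Nat.card_eq_fintype_card, hinner a b])]
    rw [← Finset.add_sum_erase _ _ (Finset.mem_univ (0 : F)), if_pos rfl]
    congr 1
    rw [Finset.sum_congr rfl (fun b hb => if_neg (Finset.ne_of_mem_erase hb)),
      Finset.sum_const, Finset.card_erase_of_mem (Finset.mem_univ _), Finset.card_univ,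
      smul_eq_mul]
  rw [Finset.sum_congr rfl (fun a _ => hmid a)]
  rw [← Finset.add_sum_erase _ _ (Finset.mem_univ (0 : F)), if_pos rfl, zero_add]
  rw [Finset.sum_congr rfl (fun a ha => by rw [if_neg (Finset.ne_of_mem_erase ha)]),
    Finset.sum_const, Finset.card_erase_of_mem (Finset.mem_univ _), Finset.card_univ,
    smul_eq_mul]
  have hq1 : 1 ≤ q := Fintype.card_pos
  obtain ⟨r, hr⟩ : ∃ r, q = r + 1 := ⟨q - 1, by omega⟩
  have hr' : Fintype.card F = r + 1 := by rw [← hqdef, hr]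
  rw [hr, hr']
  simp only [Nat.add_sub_cancel]
  ring


lemma aux_main [Fintype F] (hodd : Odd (Fintype.card F)) :
    Nat.card {x : (M2)ˣ ⧸ Subgroup.center (M2)ˣ // orderOf x = 2} =
      Fintype.card F ^ 2 := by
  classical
  have h2 : (2 : F) ≠ 0 := aux_two_ne_zero hodd
  have fiber := aux_card_fiber (Subgroup.center (M2)ˣ) (fun x => orderOf x = 2)
  have hcent := aux_card_center (F := F)
  have e : {g : (M2)ˣ // orderOf (QuotientGroup.mk g :
        (M2)ˣ ⧸ Subgroup.center (M2)ˣ) = 2} ≃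
      {v : F × F × F // v.2.1 * v.2.2 ≠ -(v.1 * v.1)} := by
    refine Equiv.trans (Equiv.subtypeEquivRight (fun A => aux_order_two_iff h2 A)) ?_
    have hdetv : ∀ v : {v : F × F × F // v.2.1 * v.2.2 ≠ -(v.1 * v.1)},
        IsUnit (!![v.1.1, v.1.2.1; v.1.2.2, -v.1.1] : M2).det := fun v => by
      rw [isUnit_iff_ne_zero, Matrix.det_fin_two_of]
      intro h
      exact v.2 (by linear_combination -h)
    have htrv : ∀ A : {A : (M2)ˣ // (A : M2) 0 0 + (A : M2) 1 1 = 0},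
        ((A : (M2)ˣ) : M2) 0 1 * ((A : (M2)ˣ) : M2) 1 0 ≠
          -(((A : (M2)ˣ) : M2) 0 0 * ((A : (M2)ˣ) : M2) 0 0) := by
      rintro ⟨A, hA⟩
      have hdet : ((A : M2)).det ≠ 0 := by
        have hu : IsUnit ((A : M2)) := A.isUnit
        rw [Matrix.isUnit_iff_isUnit_det, isUnit_iff_ne_zero] at hu
        exact hu
      rw [Matrix.det_fin_two] at hdet
      intro h
      apply hdet
      simp only at h ⊢
      linear_combination -h + ((A : M2) 0 0) * hA
    exact
      { toFun := fun A => ⟨(((A : (M2)ˣ) : M2) 0 0, ((A : (M2)ˣ) : M2) 0 1,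
          ((A : (M2)ˣ) : M2) 1 0), htrv A⟩,
        invFun := fun v => ⟨Matrix.nonsingInvUnit _ (hdetv v), by
          show (!![v.1.1, v.1.2.1; v.1.2.2, -v.1.1] : M2) 0 0 +
            (!![v.1.1, v.1.2.1; v.1.2.2, -v.1.1] : M2) 1 1 = 0
          simp⟩,
        left_inv := by
          rintro ⟨A, hA⟩
          apply Subtype.ext
          apply Units.ext
          show (!![((A : M2)) 0 0, ((A : M2)) 0 1; ((A : M2)) 1 0, -((A : M2)) 0 0] : M2)
            = (A : M2)
          have h11 : ((A : M2)) 1 1 = -((A : M2)) 0 0 := by linear_combination hA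
          conv_rhs => rw [Matrix.eta_fin_two ((A : M2)), h11],
        right_inv := by
          rintro ⟨⟨a, b, c⟩, hv⟩
          apply Subtype.ext
          show ((!![a, b; c, -a] : M2) 0 0, (!![a, b; c, -a] : M2) 0 1,
            (!![a, b; c, -a] : M2) 1 0) = (a, b, c)
          simp }
  have hcount := aux_card_triple (F := F)
  rw [← Nat.card_congr e, fiber, hcent] at hcount
  have hq2 : 1 < Fintype.card F := Fintype.one_lt_card
  exact Nat.eq_of_mul_eq_mul_right (by omega) hcount

end Aux

theorem stmt9 (p e q : ℕ) (hp : p.Prime) (hodd : Odd q) (he : 0 < e) (hq : q = p ^ e)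
    (F : Type*) [Field F] [Fintype F] (hF : Fintype.card F = q) :
    Nat.card {x : Matrix.GeneralLinearGroup (Fin 2) F ⧸
        Subgroup.center (Matrix.GeneralLinearGroup (Fin 2) F) // orderOf x = 2} = q ^ 2 := by
  have h := aux_main (F := F) (by rw [hF]; exact hodd)
  rw [hF] at h
  exact h
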